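/- Generalized Hardy inequality: Let $\alpha,\beta\in\mathbb{R}$ with $\alpha\geq 0$, $\alpha+\beta<1$, set $\delta=\alpha+\beta$. Then for every $u\in H^1_{\alpha,\beta,0}(0,1)$, $$\frac{(1-\delta)^2}{4}\int_0^1 \frac{u^2}{x^{2-\delta}}dx \leq \int_0^1 x^{\delta}|u'|^2 dx.$$ -/

import Mathlib

open MeasureTheory Set Filter Topology

set_option maxHeartbeats 1000000

private lemma aux_tendsto {f : ℝ → ℝ} (hf : IntegrableOn f (Ioo 0 1)) {a : ℕ → ℝ}
    (ha1 : ∀ i, a i ≤ 1) (ha0 : Tendsto a atTop (𝓝 0)) :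
    Tendsto (fun i => ∫ x in Ioo 0 (a i), f x) atTop (𝓝 0) := by
  have hmeas : Tendsto (fun i => (volume.restrict (Ioo (0:ℝ) 1)) (Ioo 0 (a i))) atTop (𝓝 0) := by
    have h1 : ∀ i, (volume.restrict (Ioo (0:ℝ) 1)) (Ioo 0 (a i)) ≤ ENNReal.ofReal (a i) := by
      intro i
      calc (volume.restrict (Ioo (0:ℝ) 1)) (Ioo 0 (a i)) ≤ volume (Ioo (0:ℝ) (a i)) :=
            Measure.restrict_apply_le _ _
        _ = ENNReal.ofReal (a i - 0) := Real.volume_Ioo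
        _ = ENNReal.ofReal (a i) := by rw [sub_zero]
    have h2 : Tendsto (fun i => ENNReal.ofReal (a i)) atTop (𝓝 0) := by
      simpa using ENNReal.tendsto_ofReal ha0
    exact tendsto_of_tendsto_of_tendsto_of_le_of_le tendsto_const_nhds h2 (fun i => zero_le) h1
  have h3 := hf.tendsto_setIntegral_nhds_zero hmeas
  refine h3.congr fun i => ?_
  rw [Measure.restrict_restrict measurableSet_Ioo]
  congr 1
  rw [Ioo_inter_Ioo]
  simp [min_eq_left (ha1 i)]

theorem stmt4 (α β : ℝ) (hα : 0 ≤ α) (hαβ : α + β < 1) (u u' : ℝ → ℝ)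
    (hderiv : ∀ x ∈ Ioo (0:ℝ) 1, HasDerivAt u (u' x) x)
    (hu : IntegrableOn (fun x => u x ^ 2 * x ^ β) (Ioo 0 1))
    (hint : IntegrableOn (fun x => x ^ (α + β) * u' x ^ 2) (Ioo 0 1))
    (hu0 : Tendsto u (𝓝[>] (0:ℝ)) (𝓝 0))
    (hu1 : Tendsto u (𝓝[<] (1:ℝ)) (𝓝 0)) :
    (1 - (α + β))^2 / 4 * ∫ x in Ioo (0:ℝ) 1, u x ^ 2 / x ^ (2 - (α + β)) ≤
      ∫ x in Ioo (0:ℝ) 1, x ^ (α + β) * u' x ^ 2 := by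
  set δ := α + β with hδdef
  set c := (1 - δ)/2 with hcdef
  have hδ1 : δ < 1 := hαβ
  have hc : 0 < c := by rw [hcdef]; linarith
  have h2c : δ - 1 = -(2*c) := by rw [hcdef]; ring
  -- continuity of u on Ioo
  have hucont : ContinuousOn u (Ioo 0 1) := fun x hx =>
    (hderiv x hx).continuousAt.continuousWithinAt
  -- measurability of u'
  have hmu' : AEStronglyMeasurable u' (volume.restrict (Ioo 0 1)) := by
    refine (measurable_deriv u).aestronglyMeasurable.congr ?_
    filter_upwards [ae_restrict_mem measurableSet_Ioo] with x hx
    exact (hderiv x hx).deriv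
  -- J and its nonnegativity
  set J := ∫ x in Ioo (0:ℝ) 1, x ^ δ * u' x ^ 2 with hJdef
  have hJ0 : 0 ≤ J := by
    refine setIntegral_nonneg measurableSet_Ioo fun x hx => ?_
    exact mul_nonneg (Real.rpow_nonneg hx.1.le _) (sq_nonneg _)
  -- pointwise bound on |u'| with parameter lam
  have hbound : ∀ lam : ℝ, 0 < lam → ∀ x ∈ Ioo (0:ℝ) 1,
      |u' x| ≤ (lam * x ^ (-δ) + lam⁻¹ * (x ^ δ * u' x ^ 2))/2 := by
    intro lam hlam x hx
    have hx0 : (0:ℝ) < x := hx.1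
    have ht : (0:ℝ) < x ^ δ := Real.rpow_pos_of_pos hx0 _
    have h1 : x ^ (-δ) * x ^ δ = 1 := by
      rw [← Real.rpow_add hx0]; simp
    have hli : lam * lam⁻¹ = 1 := mul_inv_cancel₀ hlam.ne'
    have habs : |u' x| * |u' x| = u' x ^ 2 := by rw [← abs_mul, abs_mul_self]; ring
    have h5 : lam * x ^ δ * ((lam * x ^ (-δ) + lam⁻¹ * (x ^ δ * u' x ^ 2)) - 2 * |u' x|)
        = (lam - x ^ δ * |u' x|)^2 := by
      linear_combination (lam^2) * h1 + ((x^δ)^2 * u' x ^ 2) * hli - (x^δ)^2 * habs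
    have h6 : 0 ≤ (lam * x ^ (-δ) + lam⁻¹ * (x ^ δ * u' x ^ 2)) - 2 * |u' x| := by
      have := sq_nonneg (lam - x ^ δ * |u' x|)
      rw [← h5] at this
      exact nonneg_of_mul_nonneg_right this (mul_pos hlam ht)
    linarith
  -- integrability of x ^ (-δ) on Ioo 0 1
  have hrpow_int : IntegrableOn (fun x : ℝ => x ^ (-δ)) (Ioo 0 1) := by
    rw [← intervalIntegrable_iff_integrableOn_Ioo_of_le zero_le_one]
    exact intervalIntegral.intervalIntegrable_rpow' (by linarith)
  -- integrability of u' on Ioo 0 1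
  have hu'int : IntegrableOn u' (Ioo 0 1) := by
    refine Integrable.mono' (((hrpow_int.const_mul 1).add (hint.const_mul 1)).div_const 2) hmu' ?_
    filter_upwards [ae_restrict_mem measurableSet_Ioo] with x hx
    simpa using hbound 1 one_pos x hx
  -- FTC from 0: u a = ∫ over Ioo 0 a of u'
  have key0 : ∀ a ∈ Ioo (0:ℝ) 1, u a = ∫ x in Ioo 0 a, u' x := by
    intro a0 ha
    set t : ℕ → ℝ := fun k => a0 * ((k:ℝ)+2)⁻¹ with htdef
    have htpos : ∀ k, 0 < t k := fun k => by
      have : (0:ℝ) < ((k:ℝ)+2)⁻¹ := by positivity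
      exact mul_pos ha.1 this
    have htlt : ∀ k, t k < a0 := by
      intro k
      have h1 : ((k:ℝ)+2)⁻¹ < 1 := by
        rw [inv_lt_one_iff₀]; right; push_cast; linarith [Nat.cast_nonneg (α := ℝ) k]
      calc t k = a0 * ((k:ℝ)+2)⁻¹ := rfl
        _ < a0 * 1 := by exact mul_lt_mul_of_pos_left h1 ha.1
        _ = a0 := mul_one _
    have ht0 : Tendsto t atTop (𝓝 0) := by
      have h1 : Tendsto (fun k : ℕ => ((k:ℝ)+2)⁻¹) atTop (𝓝 0) :=
        tendsto_inv_atTop_zero.comp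
          (tendsto_atTop_add_const_right atTop 2 tendsto_natCast_atTop_atTop)
      simpa using h1.const_mul a0
    have heq : ∀ k, u (t k) + (∫ x in Ioo 0 a0, u' x) - (∫ x in Ioo 0 (t k), u' x) = u a0 := by
      intro k
      have htk : t k ∈ Ioo (0:ℝ) 1 := ⟨htpos k, (htlt k).trans ha.2⟩
      have hIk : Ioc (t k) a0 ⊆ Ioo (0:ℝ) 1 := fun x hx =>
        ⟨(htpos k).trans hx.1, lt_of_le_of_lt hx.2 ha.2⟩
      have h1 : u a0 - u (t k) = ∫ x in Ioc (t k) a0, u' x := by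
        rw [← intervalIntegral.integral_of_le (htlt k).le]
        refine (intervalIntegral.integral_eq_sub_of_hasDerivAt (fun x hx => ?_) ?_).symm
        · rw [uIcc_of_le (htlt k).le] at hx
          exact hderiv x ⟨(htpos k).trans_le hx.1, lt_of_le_of_lt hx.2 ha.2⟩
        · rw [intervalIntegrable_iff, uIoc_of_le (htlt k).le]
          exact hu'int.mono_set hIk
      have h2 : (∫ x in Ioo 0 a0, u' x)
          = (∫ x in Ioo 0 (t k), u' x) + ∫ x in Ico (t k) a0, u' x := by
        rw [← setIntegral_union]
        · rw [Ioo_union_Ico_eq_Ioo (htpos k) (htlt k).le]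
        · exact Set.disjoint_left.2 fun x hx hx' => absurd hx'.1 (not_le.2 hx.2)
        · exact measurableSet_Ico
        · exact hu'int.mono_set (fun x hx => ⟨hx.1, hx.2.trans ((htlt k).trans ha.2)⟩)
        · exact hu'int.mono_set (fun x hx =>
            ⟨(htpos k).trans_le hx.1, lt_of_lt_of_le hx.2 ha.2.le⟩)
      have h3 : (∫ x in Ico (t k) a0, u' x) = ∫ x in Ioc (t k) a0, u' x := by
        rw [integral_Ico_eq_integral_Ioo, ← integral_Ioc_eq_integral_Ioo]
      rw [h2, h3, ← h1]
      ring
    have hlim1 : Tendsto (fun k => u (t k)) atTop (𝓝 0) :=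
      hu0.comp (tendsto_nhdsWithin_of_tendsto_nhds_of_eventually_within t ht0
        (Eventually.of_forall fun k => htpos k))
    have hlim2 : Tendsto (fun k => ∫ x in Ioo 0 (t k), u' x) atTop (𝓝 0) :=
      aux_tendsto hu'int (fun k => ((htlt k).trans ha.2).le) ht0
    have hlim : Tendsto (fun k => u (t k) + (∫ x in Ioo 0 a0, u' x)
        - (∫ x in Ioo 0 (t k), u' x)) atTop (𝓝 (0 + (∫ x in Ioo 0 a0, u' x) - 0)) :=
      (hlim1.add tendsto_const_nhds).sub hlim2
    have := tendsto_nhds_unique (hlim.congr heq) tendsto_const_nhds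
    rw [← this]
    ring
  -- continuity of the weighted square
  have hgcont : ContinuousOn (fun x : ℝ => u x ^ 2 * x ^ (δ-2)) (Ioo 0 1) := by
    refine (hucont.pow 2).mul (fun x hx => ?_)
    exact (Real.continuousAt_rpow_const x (δ-2) (Or.inl hx.1.ne')).continuousWithinAt
  -- value of ∫ x^(-δ) over Ioo 0 a
  have hrpow_val : ∀ a ∈ Ioo (0:ℝ) 1, ∫ x in Ioo 0 a, x ^ (-δ) = a ^ (1-δ) / (1-δ) := by
    intro a0 ha
    rw [← integral_Ioc_eq_integral_Ioo, ← intervalIntegral.integral_of_le ha.1.le,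
      integral_rpow (Or.inl (by linarith))]
    rw [Real.zero_rpow (by intro h; linarith [h] : -δ + 1 ≠ 0), (by ring : -δ + 1 = 1 - δ)]
    ring
  -- boundary bound at 0
  have hwbound : ∀ a ∈ Ioo (0:ℝ) 1,
      u a ^ 2 * a ^ (δ-1) ≤ ((1/(1-δ)+1)/2)^2 * ((∫ x in Ioo 0 a, x ^ δ * u' x ^ 2) + a) := by
    intro a0 ha
    set K := ∫ x in Ioo (0:ℝ) a0, x ^ δ * u' x ^ 2 with hKdef
    set C := ((1/(1-δ)+1)/2) with hCdef
    have hsub0 : Ioo (0:ℝ) a0 ⊆ Ioo (0:ℝ) 1 := fun x hx => ⟨hx.1, hx.2.trans ha.2⟩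
    have hK0 : 0 ≤ K := setIntegral_nonneg measurableSet_Ioo fun x hx =>
      mul_nonneg (Real.rpow_nonneg hx.1.le _) (sq_nonneg _)
    have hs : (0:ℝ) < Real.sqrt (K + a0) := Real.sqrt_pos.2 (by linarith [ha.1])
    set s := Real.sqrt (K + a0) with hsdef
    have hss : s * s = K + a0 := Real.mul_self_sqrt (by linarith [ha.1])
    set A2 := a0 ^ ((δ-1)/2) with hA2def
    have hA2 : (0:ℝ) < A2 := Real.rpow_pos_of_pos ha.1 _
    set lam := s * A2 with hlamdef
    have hlam : 0 < lam := mul_pos hs hA2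
    have f1 : A2 * A2 = a0 ^ (δ-1) := by
      rw [hA2def, ← Real.rpow_add ha.1]; congr 1; ring
    have f2 : a0 ^ (δ-1) * a0 ^ (1-δ) = 1 := by
      rw [← Real.rpow_add ha.1]; simp
    -- integral bound on |u a0|
    have h1 : |u a0| ≤ (lam * (a0 ^ (1-δ) / (1-δ)) + lam⁻¹ * K) / 2 := by
      rw [key0 a0 ha]
      have hb1 : |∫ x in Ioo (0:ℝ) a0, u' x| ≤ ∫ x in Ioo (0:ℝ) a0, |u' x| := by
        simpa [Real.norm_eq_abs] using
          norm_integral_le_integral_norm (μ := volume.restrict (Ioo (0:ℝ) a0)) u'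
      have hiabs : IntegrableOn (fun x => |u' x|) (Ioo 0 a0) :=
        (hu'int.mono_set hsub0).abs
      have hirhs : IntegrableOn (fun x => (lam * x ^ (-δ) + lam⁻¹ * (x ^ δ * u' x ^ 2)) / 2)
          (Ioo 0 a0) :=
        (((hrpow_int.mono_set hsub0).const_mul lam).add
          ((hint.mono_set hsub0).const_mul lam⁻¹)).div_const 2
      have hb2 : (∫ x in Ioo (0:ℝ) a0, |u' x|) ≤
          ∫ x in Ioo (0:ℝ) a0, (lam * x ^ (-δ) + lam⁻¹ * (x ^ δ * u' x ^ 2)) / 2 :=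
        setIntegral_mono_on hiabs hirhs measurableSet_Ioo fun x hx =>
          hbound lam hlam x (hsub0 hx)
      have hb3 : (∫ x in Ioo (0:ℝ) a0, (lam * x ^ (-δ) + lam⁻¹ * (x ^ δ * u' x ^ 2)) / 2)
          = (lam * (a0 ^ (1-δ) / (1-δ)) + lam⁻¹ * K) / 2 := by
        rw [integral_div, integral_add ((hrpow_int.mono_set hsub0).const_mul lam)
          ((hint.mono_set hsub0).const_mul lam⁻¹), integral_const_mul, integral_const_mul,
          hrpow_val a0 ha]
      linarith [hb1, hb2, hb3.le, hb3.ge]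
    -- algebraic manipulation
    have e1 : lam * (a0 ^ (1-δ) / (1-δ)) * A2 = s / (1-δ) := by
      calc lam * (a0 ^ (1-δ) / (1-δ)) * A2 = s * (A2 * A2 * a0 ^ (1-δ)) / (1-δ) := by
            rw [hlamdef]; ring
        _ = s * (a0 ^ (δ-1) * a0 ^ (1-δ)) / (1-δ) := by rw [f1]
        _ = s / (1-δ) := by rw [f2]; ring
    have e2 : lam⁻¹ * K * A2 = K / s := by
      have : lam⁻¹ * K * A2 = K * (A2 * A2⁻¹) * s⁻¹ := by rw [hlamdef, mul_inv]; ring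
      rw [this, mul_inv_cancel₀ hA2.ne']
      ring
    have e3 : K / s ≤ s := (div_le_iff₀ hs).2 (by nlinarith [hss, ha.1])
    have hRHS : (lam * (a0 ^ (1-δ) / (1-δ)) + lam⁻¹ * K) / 2 * A2 ≤ C * s := by
      calc (lam * (a0 ^ (1-δ) / (1-δ)) + lam⁻¹ * K) / 2 * A2
          = (lam * (a0 ^ (1-δ) / (1-δ)) * A2 + lam⁻¹ * K * A2) / 2 := by ring
        _ = (s / (1-δ) + K / s) / 2 := by rw [e1, e2]
        _ ≤ (s / (1-δ) + s) / 2 := by linarith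
        _ = C * s := by rw [hCdef]; field_simp
    have habs2 : |u a0| * A2 ≤ C * s :=
      le_trans (mul_le_mul_of_nonneg_right h1 hA2.le) hRHS
    have hfin : u a0 ^ 2 * a0 ^ (δ-1) = (|u a0| * A2)^2 := by
      rw [mul_pow, sq_abs, ← f1]; ring
    rw [hfin]
    calc (|u a0| * A2)^2 ≤ (C * s)^2 := by
          apply pow_le_pow_left₀ (by positivity) habs2
      _ = C^2 * (K + a0) := by rw [mul_pow, ← hss]; ring
  -- main inequality on compact subintervals
  have keyIneq : ∀ ε η : ℝ, ε ∈ Ioo (0:ℝ) 1 → η ∈ Ioo (0:ℝ) 1 → ε ≤ η →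
      c^2 * ∫ x in Icc ε η, u x ^ 2 * x ^ (δ-2) ≤
        J + c * (u ε ^ 2 * ε ^ (δ-1)) - c * (u η ^ 2 * η ^ (δ-1)) := by
    intro ε η hε hη hεη
    have hsub : Icc ε η ⊆ Ioo (0:ℝ) 1 := fun x hx =>
      ⟨lt_of_lt_of_le hε.1 hx.1, lt_of_le_of_lt hx.2 hη.2⟩
    have iA : IntegrableOn (fun x => x ^ δ * u' x ^ 2) (Icc ε η) := hint.mono_set hsub
    have iB : IntegrableOn (fun x => u x ^ 2 * x ^ (δ-2)) (Icc ε η) :=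
      (hgcont.mono hsub).integrableOn_compact isCompact_Icc
    have hmu'I : AEStronglyMeasurable u' (volume.restrict (Icc ε η)) :=
      hmu'.mono_measure (Measure.restrict_mono hsub le_rfl)
    have hcont1 : ContinuousOn (fun x : ℝ => 2 * u x * x ^ (δ-1)) (Icc ε η) := by
      refine ((continuousOn_const.mul (hucont.mono hsub)).mul (fun x hx => ?_))
      exact (Real.continuousAt_rpow_const x (δ-1) (Or.inl (hsub hx).1.ne')).continuousWithinAt
    have hmeas1 : AEStronglyMeasurable (fun x => 2 * u x * u' x * x ^ (δ-1))
        (volume.restrict (Icc ε η)) := by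
      have := (hcont1.aestronglyMeasurable measurableSet_Icc).mul hmu'I
      exact this.congr (ae_of_all _ fun x => by simp only [Pi.mul_apply]; ring)
    have hptw : ∀ x ∈ Icc ε η, |2 * u x * u' x * x ^ (δ-1)| ≤
        u x ^ 2 * x ^ (δ-2) + x ^ δ * u' x ^ 2 := by
      intro x hx
      have hx0 : (0:ℝ) < x := (hsub hx).1
      have hpq : x ^ ((δ-2)/2) * x ^ (δ/2) = x ^ (δ-1) := by
        rw [← Real.rpow_add hx0]; congr 1; ring
      have hp2 : x ^ ((δ-2)/2) * x ^ ((δ-2)/2) = x ^ (δ-2) := by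
        rw [← Real.rpow_add hx0]; congr 1; ring
      have hq2 : x ^ (δ/2) * x ^ (δ/2) = x ^ δ := by
        rw [← Real.rpow_add hx0]; congr 1; ring
      have e1 : u x ^ 2 * x ^ (δ-2) + x ^ δ * u' x ^ 2 + 2 * u x * u' x * x ^ (δ-1)
          = (u x * x ^ ((δ-2)/2) + u' x * x ^ (δ/2))^2 := by
        linear_combination (-(u x ^ 2)) * hp2 - (u' x ^ 2) * hq2 - (2 * u x * u' x) * hpq
      have e2 : u x ^ 2 * x ^ (δ-2) + x ^ δ * u' x ^ 2 - 2 * u x * u' x * x ^ (δ-1)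
          = (u x * x ^ ((δ-2)/2) - u' x * x ^ (δ/2))^2 := by
        linear_combination (-(u x ^ 2)) * hp2 - (u' x ^ 2) * hq2 + (2 * u x * u' x) * hpq
      rw [abs_le]
      constructor
      · nlinarith [sq_nonneg (u x * x ^ ((δ-2)/2) + u' x * x ^ (δ/2)), e1]
      · nlinarith [sq_nonneg (u x * x ^ ((δ-2)/2) - u' x * x ^ (δ/2)), e2]
    have iW1 : IntegrableOn (fun x => 2 * u x * u' x * x ^ (δ-1)) (Icc ε η) := by
      refine Integrable.mono' (iB.add iA) hmeas1 ?_
      filter_upwards [ae_restrict_mem measurableSet_Icc] with x hx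
      exact hptw x hx
    have iW : IntegrableOn (fun x => 2 * u x * u' x * x ^ (δ-1)
        + (δ-1) * (u x ^ 2 * x ^ (δ-2))) (Icc ε η) := iW1.add (iB.const_mul _)
    have hW : ∀ x ∈ Icc ε η, HasDerivAt (fun y => u y ^ 2 * y ^ (δ-1))
        (2 * u x * u' x * x ^ (δ-1) + (δ-1) * (u x ^ 2 * x ^ (δ-2))) x := by
      intro x hx
      have hx' := hsub hx
      have h1 : HasDerivAt (fun y => u y ^ 2) (2 * u x * u' x) x := by
        have := (hderiv x hx').pow 2
        refine this.congr_deriv ?_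
        ring
      have h2 : HasDerivAt (fun y : ℝ => y ^ (δ-1)) ((δ-1) * x ^ (δ-2)) x := by
        have := Real.hasDerivAt_rpow_const (x := x) (p := δ-1) (Or.inl hx'.1.ne')
        convert this using 2
        ring
      have := h1.mul h2
      refine this.congr_deriv ?_
      ring
    have hFTC : ∫ x in Icc ε η, (2 * u x * u' x * x ^ (δ-1) + (δ-1) * (u x ^ 2 * x ^ (δ-2)))
        = u η ^ 2 * η ^ (δ-1) - u ε ^ 2 * ε ^ (δ-1) := by
      rw [integral_Icc_eq_integral_Ioc, ← intervalIntegral.integral_of_le hεη]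
      refine intervalIntegral.integral_eq_sub_of_hasDerivAt
        (fun x hx => hW x (by rwa [uIcc_of_le hεη] at hx)) ?_
      rw [intervalIntegrable_iff, uIoc_of_le hεη]
      exact iW.mono_set Ioc_subset_Icc_self
    have hkey : ∀ x ∈ Icc ε η, 0 ≤ x ^ δ * u' x ^ 2 - c^2 * (u x ^ 2 * x ^ (δ-2))
        - c * (2 * u x * u' x * x ^ (δ-1) + (δ-1) * (u x ^ 2 * x ^ (δ-2))) := by
      intro x hx
      have hx0 : (0:ℝ) < x := (hsub hx).1
      have h1 : x ^ (δ-1) = x ^ (δ-2) * x := by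
        rw [← Real.rpow_add_one hx0.ne']; congr 1; ring
      have h2 : x ^ δ = x ^ (δ-2) * x * x := by
        rw [← Real.rpow_add_one hx0.ne', ← Real.rpow_add_one hx0.ne']
        congr 1; ring
      have hkey2 : x ^ δ * u' x ^ 2 - c^2 * (u x ^ 2 * x ^ (δ-2))
          - c * (2 * u x * u' x * x ^ (δ-1) + (δ-1) * (u x ^ 2 * x ^ (δ-2)))
          = x ^ (δ-2) * (x * u' x - c * u x)^2 := by
        linear_combination (u' x ^ 2) * h2 - (2 * c * u x * u' x) * h1
          - (c * u x ^ 2 * x ^ (δ-2)) * h2c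
      rw [hkey2]
      exact mul_nonneg (Real.rpow_nonneg hx0.le _) (sq_nonneg _)
    have hnonneg : 0 ≤ ∫ x in Icc ε η, (x ^ δ * u' x ^ 2 - c^2 * (u x ^ 2 * x ^ (δ-2))
        - c * (2 * u x * u' x * x ^ (δ-1) + (δ-1) * (u x ^ 2 * x ^ (δ-2)))) :=
      setIntegral_nonneg measurableSet_Icc hkey
    have hsplit : ∫ x in Icc ε η, (x ^ δ * u' x ^ 2 - c^2 * (u x ^ 2 * x ^ (δ-2))
        - c * (2 * u x * u' x * x ^ (δ-1) + (δ-1) * (u x ^ 2 * x ^ (δ-2))))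
        = (∫ x in Icc ε η, x ^ δ * u' x ^ 2)
          - c^2 * (∫ x in Icc ε η, u x ^ 2 * x ^ (δ-2))
          - c * ∫ x in Icc ε η, (2 * u x * u' x * x ^ (δ-1)
            + (δ-1) * (u x ^ 2 * x ^ (δ-2))) := by
      have i1 : IntegrableOn (fun x => x ^ δ * u' x ^ 2 - c^2 * (u x ^ 2 * x ^ (δ-2)))
          (Icc ε η) := iA.sub (iB.const_mul (c^2))
      have i2 : IntegrableOn (fun x => c * (2 * u x * u' x * x ^ (δ-1)
          + (δ-1) * (u x ^ 2 * x ^ (δ-2)))) (Icc ε η) := iW.const_mul c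
      rw [integral_sub i1 i2, integral_sub iA (iB.const_mul (c^2)),
        integral_const_mul, integral_const_mul]
    have hJle : ∫ x in Icc ε η, x ^ δ * u' x ^ 2 ≤ J := by
      refine setIntegral_mono_set hint ?_ (HasSubset.Subset.eventuallyLE hsub)
      filter_upwards [ae_restrict_mem measurableSet_Ioo] with x hx
      exact mul_nonneg (Real.rpow_nonneg hx.1.le _) (sq_nonneg _)
    rw [hsplit, hFTC] at hnonneg
    linarith
  -- sequences
  set a : ℕ → ℝ := fun n => ((n:ℝ)+2)⁻¹ with hadef
  set b : ℕ → ℝ := fun n => 1 - ((n:ℝ)+2)⁻¹ with hbdef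
  have hn2 : ∀ n : ℕ, (0:ℝ) < (n:ℝ) + 2 := fun n => by positivity
  have haval : ∀ n, a n = ((n:ℝ)+2)⁻¹ := fun n => rfl
  have hbval : ∀ n, b n = 1 - ((n:ℝ)+2)⁻¹ := fun n => rfl
  have hahalf : ∀ n, a n ≤ 1/2 := by
    intro n
    rw [haval, one_div]
    exact inv_anti₀ two_pos (by push_cast; linarith [Nat.cast_nonneg (α := ℝ) n])
  have hapos : ∀ n, 0 < a n := fun n => by rw [haval]; positivity
  have han : ∀ n, a n ∈ Ioo (0:ℝ) 1 := fun n => ⟨hapos n, by linarith [hahalf n]⟩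
  have hbn : ∀ n, b n ∈ Ioo (0:ℝ) 1 := by
    intro n
    exact ⟨by rw [hbval]; linarith [hahalf n, haval n], by
      rw [hbval]; have := hapos n; rw [haval] at this; linarith⟩
  have hab : ∀ n, a n ≤ b n := by
    intro n
    have h1 := hahalf n
    rw [hbval]
    have h2 : ((n:ℝ)+2)⁻¹ ≤ 1/2 := by rw [← haval]; exact h1
    linarith
  have ha0 : Tendsto a atTop (𝓝 0) := by
    rw [hadef]
    exact tendsto_inv_atTop_zero.comp
      (tendsto_atTop_add_const_right atTop 2 tendsto_natCast_atTop_atTop)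
  have hb1 : Tendsto b atTop (𝓝 1) := by
    rw [hbdef]
    simpa using tendsto_const_nhds.sub ha0
  -- boundary terms tend to zero
  have hwa : Tendsto (fun n => u (a n) ^ 2 * (a n) ^ (δ-1)) atTop (𝓝 0) := by
    have hK : Tendsto (fun n => ((∫ x in Ioo (0:ℝ) (a n), x ^ δ * u' x ^ 2) + a n)) atTop (𝓝 0) := by
      have h1 := aux_tendsto hint (fun i => (han i).2.le) ha0
      simpa using h1.add ha0
    refine squeeze_zero (fun n => ?_) (fun n => hwbound (a n) (han n)) ?_
    · exact mul_nonneg (sq_nonneg _) (Real.rpow_nonneg (hapos n).le _)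
    · simpa using hK.const_mul (((1/(1-δ)+1)/2)^2)
  have hwb : Tendsto (fun n => u (b n) ^ 2 * (b n) ^ (δ-1)) atTop (𝓝 0) := by
    have hub : Tendsto (fun n => u (b n)) atTop (𝓝 0) :=
      hu1.comp (tendsto_nhdsWithin_of_tendsto_nhds_of_eventually_within b hb1
        (Eventually.of_forall fun n => (hbn n).2))
    have hrp : Tendsto (fun n => (b n) ^ (δ-1)) atTop (𝓝 ((1:ℝ) ^ (δ-1))) :=
      ((Real.continuousAt_rpow_const 1 (δ-1) (Or.inl one_ne_zero)).tendsto).comp hb1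
    have := ((hub.pow 2).mul hrp)
    rw [Real.one_rpow] at this
    simpa using this
  -- limit of the RHS
  have hM : Tendsto (fun n => (J + c * (u (a n) ^ 2 * (a n) ^ (δ-1))
      - c * (u (b n) ^ 2 * (b n) ^ (δ-1)))/c^2) atTop (𝓝 (J/c^2)) := by
    have : Tendsto (fun n => J + c * (u (a n) ^ 2 * (a n) ^ (δ-1))
        - c * (u (b n) ^ 2 * (b n) ^ (δ-1))) atTop (𝓝 J) := by
      have := ((tendsto_const_nhds (x := J) (f := atTop)).add (hwa.const_mul c)).sub
        (hwb.const_mul c)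
      simpa using this
    simpa using this.div_const (c^2)
  -- union of the Icc's
  have hUnion : ⋃ n, Icc (a n) (b n) = Ioo (0:ℝ) 1 := by
    ext x
    simp only [mem_iUnion, mem_Icc, mem_Ioo]
    constructor
    · rintro ⟨n, h1, h2⟩
      exact ⟨lt_of_lt_of_le (hapos n) h1, lt_of_le_of_lt h2 (hbn n).2⟩
    · rintro ⟨hx0, hx1⟩
      obtain ⟨n, hn⟩ := exists_nat_one_div_lt (lt_min hx0 (by linarith : (0:ℝ) < 1 - x))
      refine ⟨n, ?_, ?_⟩
      · have h1 : a n ≤ 1/((n:ℝ)+1) := by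
          rw [haval, one_div]
          exact inv_anti₀ (by positivity) (by linarith)
        exact h1.trans (le_of_lt (lt_of_lt_of_le hn (min_le_left _ _)))
      · have h1 : a n ≤ 1/((n:ℝ)+1) := by
          rw [haval, one_div]
          exact inv_anti₀ (by positivity) (by linarith)
        have h2 : (1:ℝ)/((n:ℝ)+1) < 1 - x := lt_of_lt_of_le hn (min_le_right _ _)
        rw [hbval]
        have := h1.trans h2.le
        rw [haval] at this
        linarith
  have hmono : Monotone (fun n => Icc (a n) (b n)) := by
    intro m n hmn
    apply Icc_subset_Icc
    · rw [haval, haval]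
      have hc2 : (m:ℝ) ≤ (n:ℝ) := Nat.cast_le.2 hmn
      exact inv_anti₀ (by positivity) (by linarith)
    · rw [hbval, hbval]
      have : ((m:ℝ)+2)⁻¹ ≥ ((n:ℝ)+2)⁻¹ :=
        inv_anti₀ (by positivity) (by
          have : (m:ℝ) ≤ (n:ℝ) := Nat.cast_le.2 hmn
          linarith)
      linarith
  -- lintegral bound
  have hlint : ∫⁻ x in Ioo (0:ℝ) 1, ENNReal.ofReal (u x ^ 2 * x ^ (δ-2)) ≤
      ENNReal.ofReal (J/c^2) := by
    have hsubn : ∀ n, Icc (a n) (b n) ⊆ Ioo (0:ℝ) 1 := fun n x hx =>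
      ⟨lt_of_lt_of_le (hapos n) hx.1, lt_of_le_of_lt hx.2 (hbn n).2⟩
    have hIccInt : ∀ n, IntegrableOn (fun x => u x ^ 2 * x ^ (δ-2)) (Icc (a n) (b n)) := fun n =>
      (hgcont.mono (hsubn n)).integrableOn_compact isCompact_Icc
    have hIcc_le : ∀ n, (∫ x in Icc (a n) (b n), u x ^ 2 * x ^ (δ-2)) ≤
        (J + c * (u (a n) ^ 2 * (a n) ^ (δ-1)) - c * (u (b n) ^ 2 * (b n) ^ (δ-1)))/c^2 := by
      intro n
      have h := keyIneq (a n) (b n) (han n) (hbn n) (hab n)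
      rw [le_div_iff₀ (by positivity)]
      linarith
    have hL : ∀ n, (∫⁻ x in Icc (a n) (b n), ENNReal.ofReal (u x ^ 2 * x ^ (δ-2)))
        = ENNReal.ofReal (∫ x in Icc (a n) (b n), u x ^ 2 * x ^ (δ-2)) := by
      intro n
      refine (ofReal_integral_eq_lintegral_ofReal (hIccInt n) ?_).symm
      filter_upwards [ae_restrict_mem measurableSet_Icc] with x hx
      exact mul_nonneg (sq_nonneg _) (Real.rpow_nonneg (lt_of_lt_of_le (hapos n) hx.1).le _)
    rw [← hUnion, setLIntegral_iUnion_of_directed _ (hmono.directed_le)]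
    have hmonoL : Monotone (fun n =>
        ∫⁻ x in Icc (a n) (b n), ENNReal.ofReal (u x ^ 2 * x ^ (δ-2))) :=
      fun m n hmn => lintegral_mono_set (hmono hmn)
    refine le_of_tendsto_of_tendsto' (tendsto_atTop_iSup hmonoL)
      (ENNReal.tendsto_ofReal hM) fun n => ?_
    rw [hL n]
    exact ENNReal.ofReal_le_ofReal (hIcc_le n)
  -- conclude
  have hnonnegae : 0 ≤ᵐ[volume.restrict (Ioo (0:ℝ) 1)] fun x => u x ^ 2 * x ^ (δ-2) := by
    filter_upwards [ae_restrict_mem measurableSet_Ioo] with x hx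
    exact mul_nonneg (sq_nonneg _) (Real.rpow_nonneg hx.1.le _)
  have hIle : ∫ x in Ioo (0:ℝ) 1, u x ^ 2 * x ^ (δ-2) ≤ J / c^2 := by
    rw [integral_eq_lintegral_of_nonneg_ae hnonnegae
      (hgcont.aestronglyMeasurable measurableSet_Ioo)]
    have h1 := ENNReal.toReal_mono ENNReal.ofReal_ne_top hlint
    rwa [ENNReal.toReal_ofReal (div_nonneg hJ0 (by positivity))] at h1
  have hIeq : ∫ x in Ioo (0:ℝ) 1, u x ^ 2 / x ^ (2-δ) = ∫ x in Ioo (0:ℝ) 1, u x ^ 2 * x ^ (δ-2) := by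
    refine setIntegral_congr_fun measurableSet_Ioo fun x hx => ?_
    rw [div_eq_mul_inv, ← Real.rpow_neg hx.1.le]
    norm_num
  rw [hIeq]
  calc (1-δ)^2/4 * ∫ x in Ioo (0:ℝ) 1, u x ^ 2 * x ^ (δ-2)
      = c^2 * ∫ x in Ioo (0:ℝ) 1, u x ^ 2 * x ^ (δ-2) := by rw [hcdef]; ring
    _ ≤ c^2 * (J/c^2) := mul_le_mul_of_nonneg_left hIle (by positivity)
    _ = J := by field_simp
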